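/- Let A be an n×n symmetric positive definite matrix with condition number κ_A, and let η ≥ 4n κ_A². Then the function g(x) = (η/2)‖x‖₂² − ln(xᵀAx) is convex on the unit simplex Ω; i.e., its Hessian ηI − ∇²φ_A(x) is positive definite for all x ∈ Ω. -/

import Mathlib

open Matrix

/-- The Hessian of `φ_A(x) = -ln(xᵀAx)`. -/
noncomputable def hessPhi {n : ℕ} (A : Matrix (Fin n) (Fin n) ℝ) (x : Fin n → ℝ) :
    Matrix (Fin n) (Fin n) ℝ :=
  (4 / (x ⬝ᵥ A.mulVec x) ^ 2) • Matrix.vecMulVec (A.mulVec x) (A.mulVec x)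
    - (2 / (x ⬝ᵥ A.mulVec x)) • A

lemma vecMulVec_mulVec' {n : ℕ} (a y : Fin n → ℝ) :
    (Matrix.vecMulVec a a) *ᵥ y = (a ⬝ᵥ y) • a := by
  funext i
  simp [Matrix.mulVec, Matrix.vecMulVec, dotProduct, Finset.mul_sum, mul_comm,
    mul_left_comm]

lemma smul_one_eq_diag {n : ℕ} {A : Matrix (Fin n) (Fin n) ℝ} (c : ℝ) (hA : A.IsHermitian) :
    c • (1 : Matrix (Fin n) (Fin n) ℝ)
      = (hA.eigenvectorUnitary : Matrix (Fin n) (Fin n) ℝ)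
        * (c • (1 : Matrix (Fin n) (Fin n) ℝ))
        * star (hA.eigenvectorUnitary : Matrix (Fin n) (Fin n) ℝ) := by
  have hU : (hA.eigenvectorUnitary : Matrix (Fin n) (Fin n) ℝ)
      * star (hA.eigenvectorUnitary : Matrix (Fin n) (Fin n) ℝ) = 1 :=
    Matrix.mem_unitaryGroup_iff.mp hA.eigenvectorUnitary.2
  rw [Matrix.mul_smul, Matrix.mul_one, Matrix.smul_mul, hU]

lemma diag_sub_eq {n : ℕ} (c : ℝ) (f : Fin n → ℝ) :
    Matrix.diagonal ((RCLike.ofReal : ℝ → ℝ) ∘ f) - c • (1 : Matrix (Fin n) (Fin n) ℝ)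
      = Matrix.diagonal (fun i => f i - c) := by
  ext i j
  by_cases h : i = j <;> simp [Matrix.diagonal, h, Matrix.one_apply, Function.comp]

/-- Spectral lower bound: `l1 * (y⬝y) ≤ y⬝Ay`. -/
lemma quadratic_lower {n : ℕ} {A : Matrix (Fin n) (Fin n) ℝ} (hA : A.IsHermitian)
    {l1 : ℝ} (hmin : ∀ i, l1 ≤ hA.eigenvalues i) (y : Fin n → ℝ) :
    l1 * (y ⬝ᵥ y) ≤ y ⬝ᵥ A *ᵥ y := by
  have hpsd : (A - l1 • 1).PosSemidef := by
    have key : A - l1 • (1 : Matrix (Fin n) (Fin n) ℝ)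
        = (hA.eigenvectorUnitary : Matrix (Fin n) (Fin n) ℝ)
          * Matrix.diagonal (fun i => hA.eigenvalues i - l1)
          * star (hA.eigenvectorUnitary : Matrix (Fin n) (Fin n) ℝ) := by
      conv_lhs => rw [hA.spectral_theorem, Unitary.conjStarAlgAut_apply, smul_one_eq_diag l1 hA]
      rw [← Matrix.sub_mul, ← Matrix.mul_sub, diag_sub_eq]
    rw [key]
    exact Matrix.PosSemidef.mul_mul_conjTranspose_same
      (Matrix.posSemidef_diagonal_iff.mpr fun i => sub_nonneg.mpr (hmin i)) _
  have h := hpsd.dotProduct_mulVec_nonneg y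
  simp only [star_trivial] at h
  have heq : y ⬝ᵥ (A - l1 • 1) *ᵥ y = y ⬝ᵥ A *ᵥ y - l1 * (y ⬝ᵥ y) := by
    rw [Matrix.sub_mulVec, dotProduct_sub, Matrix.smul_mulVec,
      Matrix.one_mulVec, dotProduct_smul, smul_eq_mul]
  rw [heq] at h
  linarith

/-- Spectral upper bound: `y⬝Ay ≤ ln * (y⬝y)`. -/
lemma quadratic_upper {n : ℕ} {A : Matrix (Fin n) (Fin n) ℝ} (hA : A.IsHermitian)
    {ln : ℝ} (hmax : ∀ i, hA.eigenvalues i ≤ ln) (y : Fin n → ℝ) :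
    y ⬝ᵥ A *ᵥ y ≤ ln * (y ⬝ᵥ y) := by
  have hpsd : (ln • 1 - A).PosSemidef := by
    have key : ln • (1 : Matrix (Fin n) (Fin n) ℝ) - A
        = (hA.eigenvectorUnitary : Matrix (Fin n) (Fin n) ℝ)
          * Matrix.diagonal (fun i => ln - hA.eigenvalues i)
          * star (hA.eigenvectorUnitary : Matrix (Fin n) (Fin n) ℝ) := by
      have h2 : ln • (1 : Matrix (Fin n) (Fin n) ℝ)
            - Matrix.diagonal ((RCLike.ofReal : ℝ → ℝ) ∘ hA.eigenvalues)
          = Matrix.diagonal (fun i => ln - hA.eigenvalues i) := by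
        ext i j
        by_cases h : i = j <;> simp [Matrix.diagonal, h, Matrix.one_apply, Function.comp]
      conv_lhs => rw [hA.spectral_theorem, Unitary.conjStarAlgAut_apply, smul_one_eq_diag ln hA]
      rw [← Matrix.sub_mul, ← Matrix.mul_sub, h2]
    rw [key]
    exact Matrix.PosSemidef.mul_mul_conjTranspose_same
      (Matrix.posSemidef_diagonal_iff.mpr fun i => sub_nonneg.mpr (hmax i)) _
  have h := hpsd.dotProduct_mulVec_nonneg y
  simp only [star_trivial] at h
  have heq : y ⬝ᵥ (ln • 1 - A) *ᵥ y = ln * (y ⬝ᵥ y) - y ⬝ᵥ A *ᵥ y := by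
    rw [Matrix.sub_mulVec, dotProduct_sub, Matrix.smul_mulVec,
      Matrix.one_mulVec, dotProduct_smul, smul_eq_mul]
  rw [heq] at h
  linarith

/-- Cauchy–Schwarz for a PSD matrix. -/
lemma psd_cauchy_schwarz {n : ℕ} {A : Matrix (Fin n) (Fin n) ℝ} (hA : A.PosSemidef)
    (x y : Fin n → ℝ) :
    (x ⬝ᵥ A *ᵥ y) ^ 2 ≤ (x ⬝ᵥ A *ᵥ x) * (y ⬝ᵥ A *ᵥ y) := by
  open scoped MatrixOrder in obtain ⟨B, hB⟩ := CStarAlgebra.nonneg_iff_eq_star_mul_self.mp hA.nonneg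
  rw [Matrix.star_eq_conjTranspose] at hB; subst hB
  have key : ∀ u v : Fin n → ℝ, u ⬝ᵥ (Bᴴ * B) *ᵥ v = (B *ᵥ u) ⬝ᵥ (B *ᵥ v) := by
    intro u v
    rw [← Matrix.mulVec_mulVec, Matrix.dotProduct_mulVec]
    congr 1
    funext i
    simp [Matrix.vecMul, Matrix.mulVec, dotProduct, Matrix.conjTranspose_apply,
      mul_comm]
  rw [key, key, key]
  have := Finset.sum_mul_sq_le_sq_mul_sq Finset.univ (B *ᵥ x) (B *ᵥ y)
  simpa [dotProduct, pow_two] using this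

set_option maxHeartbeats 1000000 in
theorem g_convex_on_simplex (n : ℕ) (A : Matrix (Fin n) (Fin n) ℝ)
    (hA : A.PosDef) (l1 ln κ η : ℝ)
    (hmin : ∀ i, l1 ≤ hA.isHermitian.eigenvalues i)
    (hminmem : ∃ i, hA.isHermitian.eigenvalues i = l1)
    (hmax : ∀ i, hA.isHermitian.eigenvalues i ≤ ln)
    (hmaxmem : ∃ i, hA.isHermitian.eigenvalues i = ln)
    (hκ : κ = ln / l1)
    (hη : 4 * n * κ ^ 2 ≤ η) :
    ∀ x ∈ stdSimplex ℝ (Fin n), (η • (1 : Matrix (Fin n) (Fin n) ℝ) - hessPhi A x).PosDef := by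
  intro x hx
  obtain ⟨hx0, hxsum⟩ := hx
  -- basic eigenvalue facts
  have hl1 : 0 < l1 := by
    obtain ⟨i, hi⟩ := hminmem
    rw [← hi]; exact hA.eigenvalues_pos i
  have hln : 0 < ln := by
    obtain ⟨i, hi⟩ := hmaxmem
    rw [← hi]
    exact hA.eigenvalues_pos i
  have hll : l1 ≤ ln := by
    obtain ⟨i, hi⟩ := hminmem
    rw [← hi]; exact hmax i
  have hκ1 : 1 ≤ κ := by
    rw [hκ]; exact (one_le_div hl1).mpr hll
  -- n ≥ 1
  have hn : 1 ≤ (n : ℝ) := by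
    rcases Nat.eq_zero_or_pos n with h | h
    · subst h; simp at hxsum
    · exact_mod_cast h
  -- x ≠ 0
  have hxne : x ≠ 0 := by
    intro h; rw [h] at hxsum; simp at hxsum
  -- key quantities
  set q := x ⬝ᵥ A *ᵥ x with hq
  have hxx : 0 < x ⬝ᵥ x := by
    have := Matrix.dotProduct_self_star_pos_iff (v := x)
    simp only [star_trivial] at this
    exact this.mpr hxne
  have hqpos : 0 < q := by
    have := quadratic_lower hA.isHermitian hmin x
    have := mul_pos hl1 hxx
    linarith
  -- 1 ≤ n * (x ⬝ᵥ x)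
  have hcs1 : 1 ≤ (n : ℝ) * (x ⬝ᵥ x) := by
    have := Finset.sum_mul_sq_le_sq_mul_sq Finset.univ (fun _ : Fin n => (1 : ℝ)) x
    simp only [one_mul, one_pow, Finset.sum_const, Finset.card_univ, Fintype.card_fin,
      nsmul_eq_mul, mul_one] at this
    have hs : ∑ i, x i = 1 := hxsum
    rw [hs] at this
    simpa [dotProduct, pow_two] using this
  -- l1 ≤ n * q
  have hl1nq : l1 ≤ (n : ℝ) * q := by
    have h1 : l1 * (x ⬝ᵥ x) ≤ q := quadratic_lower hA.isHermitian hmin x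
    have h2 : l1 * 1 ≤ l1 * ((n : ℝ) * (x ⬝ᵥ x)) := by
      exact mul_le_mul_of_nonneg_left hcs1 hl1.le
    nlinarith
  have hsmulherm : ∀ (c : ℝ) (M : Matrix (Fin n) (Fin n) ℝ), M.IsHermitian →
      (c • M).IsHermitian := by
    intro c M hM
    unfold Matrix.IsHermitian at *
    rw [Matrix.conjTranspose_smul, hM, star_trivial]
  refine Matrix.PosDef.of_dotProduct_mulVec_pos ?_ ?_
  · -- Hermitian
    apply Matrix.IsHermitian.sub
    · exact hsmulherm η 1 Matrix.isHermitian_one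
    · unfold hessPhi
      apply Matrix.IsHermitian.sub
      · apply hsmulherm
        unfold Matrix.IsHermitian
        ext i j
        simp [Matrix.vecMulVec_apply, Matrix.conjTranspose_apply, mul_comm]
      · exact hsmulherm _ _ hA.isHermitian
  · -- positive definiteness
    intro y hy
    simp only [star_trivial]
    set a := A *ᵥ x with ha
    set c := a ⬝ᵥ y with hc
    set t := y ⬝ᵥ A *ᵥ y with ht
    set s := y ⬝ᵥ y with hs
    have hform : y ⬝ᵥ (η • (1 : Matrix (Fin n) (Fin n) ℝ) - hessPhi A x) *ᵥ y
        = η * s - (4 / q ^ 2) * c ^ 2 + (2 / q) * t := by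
      unfold hessPhi
      rw [Matrix.sub_mulVec, Matrix.sub_mulVec, dotProduct_sub, dotProduct_sub,
        Matrix.smul_mulVec, Matrix.smul_mulVec, Matrix.smul_mulVec,
        Matrix.one_mulVec, dotProduct_smul, dotProduct_smul,
        dotProduct_smul, vecMulVec_mulVec', dotProduct_smul]
      simp only [smul_eq_mul, ← hq, ← ht, ← hs, ← hc]
      rw [show y ⬝ᵥ (A *ᵥ x) = c from (dotProduct_comm _ _).trans hc.symm]
      ring
    rw [hform]
    -- bounds
    have hs0 : 0 < s := by
      have := Matrix.dotProduct_self_star_pos_iff (v := y)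
      simp only [star_trivial] at this
      exact this.mpr hy
    have htlow : l1 * s ≤ t := quadratic_lower hA.isHermitian hmin y
    have ht0 : 0 < t := lt_of_lt_of_le (mul_pos hl1 hs0) htlow
    have htup : t ≤ ln * s := quadratic_upper hA.isHermitian hmax y
    have hCS : c ^ 2 ≤ q * t := by
      have hAt : Aᵀ = A := by
        ext i j
        have := congrFun (congrFun hA.isHermitian.eq i) j
        simpa using this
      have hxy : c = x ⬝ᵥ A *ᵥ y := by
        rw [hc, ha, dotProduct_mulVec x A y, ← Matrix.mulVec_transpose, hAt]
      rw [hxy]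
      exact psd_cauchy_schwarz hA.posSemidef x y
    -- main inequality
    have hq2 : (0:ℝ) < q ^ 2 := by positivity
    -- step 1 : -(4/q^2) * c^2 ≥ -(4/q) * t
    have hstep1 : (4 / q ^ 2) * c ^ 2 ≤ (4 / q) * t := by
      rw [div_mul_eq_mul_div, div_mul_eq_mul_div, div_le_div_iff₀ hq2 hqpos]
      have : 4 * c ^ 2 * q ≤ 4 * (q * t) * q := by nlinarith
      calc 4 * c ^ 2 * q ≤ 4 * (q * t) * q := this
        _ = 4 * t * q ^ 2 := by ring
    -- step 2 : η * q > 2 * ln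
    have hstep2 : 2 * ln < η * q := by
      have h1 : 4 * (n : ℝ) * κ ^ 2 * q ≤ η * q := mul_le_mul_of_nonneg_right hη hqpos.le
      have h2 : 4 * κ ^ 2 * l1 ≤ 4 * κ ^ 2 * ((n:ℝ) * q) := by
        apply mul_le_mul_of_nonneg_left hl1nq; positivity
      have h3 : 4 * κ ^ 2 * l1 = 4 * ln ^ 2 / l1 := by
        rw [hκ]; field_simp
      have h4 : 4 * ln ≤ 4 * ln ^ 2 / l1 := by
        rw [le_div_iff₀ hl1]; nlinarith
      nlinarith
    -- conclude: η*s - (4/q^2)c² + (2/q)t ≥ η*s - (4/q)t + (2/q)t = η*s - (2/q)t > 0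
    have hfin : (2 / q) * t < η * s := by
      rw [div_mul_eq_mul_div, div_lt_iff₀ hqpos]
      have h5 : 2 * t ≤ 2 * ln * s := by nlinarith
      have h6 : 2 * ln * s < η * q * s := mul_lt_mul_of_pos_right hstep2 hs0
      have h9 : η * q * s = η * s * q := by ring
      linarith
    have h7 : (4:ℝ) / q = 2 / q + 2 / q := by rw [← add_div]; norm_num
    have h8 : (4 / q) * t = (2 / q) * t + (2 / q) * t := by rw [h7]; ring
    linarith [hstep1, hfin, h8]
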